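/- Let n = r_1 + ... + r_k + s with r = r_1+...+r_k, and let δ_1 ≥ ... ≥ δ_m be the conjugate partition of (r_1,...,r_k). Assume m is even and m ≤ 2s. Then the nondecreasing rearrangement m̃_0 ≤ m̃_1 ≤ ... ≤ m̃_{2n} of the multiset ⋃_j {1,...,r_j} ∪ ⋃_j {1,...,r_j} ∪ {1,...,2s+1} (the Levi fundamental degrees for the partition (r_1,r_1,...,r_k,r_k,2s+1) of 2n+1) is the sequence with value i repeated 2δ_i + 1 times for i = 1,...,m, followed by m+1, m+2, ..., 2s+1; moreover its odd-index subsequence m̃_1, m̃_3, ..., m̃_{2n−1} equals the nondecreasing rearrangement of the multiset ⋃_j {1,...,r_j} ∪ {2,4,...,2s}. -/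

import Mathlib

namespace TypeBAux

def oddIdx : List ℕ → List ℕ
  | [] => []
  | [_] => []
  | _ :: b :: l => b :: oddIdx l

theorem oddIdx_getD : ∀ (l : List ℕ) (j : ℕ), (oddIdx l).getD j 0 = l.getD (2 * j + 1) 0
  | [], j => by simp [oddIdx]
  | [a], j => by
    show ([] : List ℕ).getD j 0 = [a].getD (2 * j + 1) 0
    rw [List.getD_eq_default _ _ (by simp), List.getD_eq_default _ _ (by simp only [List.length_singleton]; omega)]
  | a :: b :: l, 0 => by simp [oddIdx]
  | a :: b :: l, j + 1 => by
    have h := oddIdx_getD l j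
    show (b :: oddIdx l).getD (j + 1) 0 = _
    rw [List.getD_cons_succ, show 2 * (j + 1) + 1 = 2 * j + 1 + 1 + 1 by ring,
      List.getD_cons_succ, List.getD_cons_succ]
    exact h

theorem oddIdx_append : ∀ (l₁ l₂ : List ℕ), l₁.length % 2 = 0 →
    oddIdx (l₁ ++ l₂) = oddIdx l₁ ++ oddIdx l₂
  | [], l₂, _ => by simp [oddIdx]
  | [a], l₂, h => by simp at h
  | a :: b :: l, l₂, h => by
    have h' : l.length % 2 = 0 := by simp at h; omega
    show oddIdx (a :: b :: (l ++ l₂)) = _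
    show b :: oddIdx (l ++ l₂) = b :: oddIdx l ++ oddIdx l₂
    rw [oddIdx_append l l₂ h']
    rfl

theorem oddIdx_replicate : ∀ (b y : ℕ), oddIdx (List.replicate (2 * b) y) = List.replicate b y
  | 0, y => rfl
  | b + 1, y => by
    rw [show 2 * (b + 1) = 2 * b + 1 + 1 by ring, List.replicate_succ, List.replicate_succ]
    show y :: oddIdx (List.replicate (2 * b) y) = _
    rw [oddIdx_replicate b y, List.replicate_succ]

theorem oddIdx_pair (a b x y : ℕ) :
    oddIdx (List.replicate (2 * a + 1) x ++ List.replicate (2 * b + 1) y)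
      = List.replicate a x ++ List.replicate (b + 1) y := by
  induction a with
  | zero =>
    show oddIdx (List.replicate (2 * 0 + 1) x ++ List.replicate (2 * b + 1) y) = _
    rw [show 2 * 0 + 1 = 1 by rfl, List.replicate_one, List.replicate_succ]
    show y :: oddIdx (List.replicate (2 * b) y) = _
    rw [oddIdx_replicate]
    simp [List.replicate_succ]
  | succ a ih =>
    rw [show 2 * (a + 1) + 1 = 2 * a + 1 + 1 + 1 by ring, List.replicate_succ,
      List.replicate_succ, List.cons_append, List.cons_append]
    show x :: oddIdx (List.replicate (2 * a + 1) x ++ List.replicate (2 * b + 1) y) = _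
    rw [ih, List.replicate_succ]
    rfl

theorem oddIdx_flatMap (f : ℕ → List ℕ) :
    ∀ (l : List ℕ), (∀ x ∈ l, (f x).length % 2 = 0) →
      oddIdx (l.flatMap f) = l.flatMap fun x => oddIdx (f x)
  | [], _ => by simp [oddIdx]
  | a :: l, h => by
    rw [List.flatMap_cons, List.flatMap_cons, oddIdx_append _ _ (h a (by simp)),
      oddIdx_flatMap f l (fun x hx => h x (by simp [hx]))]

theorem length_flatMap_even (f : ℕ → List ℕ) :
    ∀ (l : List ℕ), (∀ x ∈ l, (f x).length % 2 = 0) → (l.flatMap f).length % 2 = 0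
  | [], _ => by simp
  | a :: l, h => by
    rw [List.flatMap_cons, List.length_append]
    have h1 := h a (by simp)
    have h2 := length_flatMap_even f l (fun x hx => h x (by simp [hx]))
    omega

theorem flatMap_congr {l : List ℕ} {f g : ℕ → List ℕ} (h : ∀ x ∈ l, f x = g x) :
    l.flatMap f = l.flatMap g := by
  induction l with
  | nil => rfl
  | cons a l ih =>
    rw [List.flatMap_cons, List.flatMap_cons, h a (by simp), ih (fun x hx => h x (by simp [hx]))]

theorem flatMap_singleton_eq_map (l : List ℕ) (g : ℕ → ℕ) :
    (l.flatMap fun x => [g x]) = l.map g := by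
  induction l with
  | nil => rfl
  | cons a l ih => rw [List.flatMap_cons, ih]; rfl

theorem sorted_fr (c : ℕ → ℕ) : ∀ (N : ℕ),
    List.Pairwise (· ≤ ·) ((List.range N).flatMap fun i => List.replicate (c i) (i + 1))
  | 0 => by simp
  | N + 1 => by
    rw [List.range_succ, List.flatMap_append, List.flatMap_singleton]
    rw [List.pairwise_append]
    refine ⟨sorted_fr c N, List.pairwise_replicate.2 (Or.inr le_rfl), ?_⟩
    intro x hx y hy
    rw [List.mem_flatMap] at hx
    obtain ⟨i, hi, hxi⟩ := hx
    rw [List.mem_replicate] at hxi hy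
    rw [List.mem_range] at hi
    omega

theorem count_fr (c : ℕ → ℕ) (v : ℕ) : ∀ (N : ℕ),
    ((List.range N).flatMap fun i => List.replicate (c i) (i + 1)).count v
      = if 1 ≤ v ∧ v ≤ N then c (v - 1) else 0
  | 0 => by
    simp only [List.range_zero, List.flatMap_nil, List.count_nil]
    rw [if_neg (by omega)]
  | N + 1 => by
    rw [List.range_succ, List.flatMap_append, List.flatMap_singleton, List.count_append,
      count_fr c v N, List.count_replicate]
    simp only [beq_iff_eq]
    by_cases hv : N + 1 = v
    · rw [if_pos hv, if_neg (show ¬(1 ≤ v ∧ v ≤ N) by omega),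
        if_pos (show 1 ≤ v ∧ v ≤ N + 1 by omega), show v - 1 = N by omega]
      simp
    · rw [if_neg hv]
      by_cases h1 : 1 ≤ v ∧ v ≤ N
      · rw [if_pos h1, if_pos (show 1 ≤ v ∧ v ≤ N + 1 by omega)]
        simp
      · rw [if_neg h1, if_neg (show ¬(1 ≤ v ∧ v ≤ N + 1) by omega)]

theorem count_shift_range (n v : ℕ) :
    Multiset.count (v + 1) (Multiset.map (· + 1) (Multiset.range n)) = if v + 1 ≤ n then 1 else 0 := by
  have h1 := Multiset.count_map_eq_count' (· + 1) (Multiset.range n)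
    (fun a b h => by simpa using h) v
  have h2 : Multiset.count v (Multiset.range n) = if v + 1 ≤ n then 1 else 0 := by
    rw [Multiset.count_eq_of_nodup (Multiset.nodup_range _)]
    simp only [Multiset.mem_range]
    split_ifs <;> omega
  exact h1.trans h2

theorem count_zero_shift_range (n : ℕ) :
    Multiset.count 0 (Multiset.map (· + 1) (Multiset.range n)) = 0 := by
  rw [Multiset.count_eq_zero]
  simp

theorem count_bind_r (k : ℕ) (r : Fin k → ℕ) (v : ℕ) :
    Multiset.count (v + 1)
      (Finset.univ.val.bind fun j : Fin k => Multiset.map (· + 1) (Multiset.range (r j)))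
      = (Finset.univ.filter fun j : Fin k => v + 1 ≤ r j).card := by
  rw [Multiset.count_bind]
  have : (Finset.univ.val.map fun j : Fin k =>
        Multiset.count (v + 1) (Multiset.map (· + 1) (Multiset.range (r j))))
      = Finset.univ.val.map fun j : Fin k => if v + 1 ≤ r j then 1 else 0 := by
    apply Multiset.map_congr rfl
    intro j _
    exact count_shift_range (r j) v
  rw [this]
  rw [show ((Finset.univ.val.map fun j : Fin k => if v + 1 ≤ r j then 1 else 0).sum
      = ∑ j : Fin k, if v + 1 ≤ r j then 1 else 0) from rfl]
  rw [Finset.card_filter]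

theorem count_zero_bind_r (k : ℕ) (r : Fin k → ℕ) :
    Multiset.count 0
      (Finset.univ.val.bind fun j : Fin k => Multiset.map (· + 1) (Multiset.range (r j))) = 0 := by
  rw [Multiset.count_eq_zero]
  simp [Multiset.mem_bind]

theorem count_evens (s v : ℕ) :
    Multiset.count v (Multiset.map (fun i => 2 * (i + 1)) (Multiset.range s))
      = if v % 2 = 0 ∧ 1 ≤ v ∧ v ≤ 2 * s then 1 else 0 := by
  by_cases h : v % 2 = 0 ∧ 1 ≤ v ∧ v ≤ 2 * s
  · obtain ⟨h0, h1v, h2v⟩ := h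
    obtain ⟨i, hi1, hi2⟩ : ∃ i, v = 2 * (i + 1) ∧ i < s := ⟨v / 2 - 1, by omega, by omega⟩
    subst hi1
    rw [if_pos ⟨h0, h1v, h2v⟩]
    have hc := Multiset.count_map_eq_count' (fun i : ℕ => 2 * (i + 1)) (Multiset.range s)
      (fun a b hab => by simp only at hab; omega) i
    have h2 : Multiset.count i (Multiset.range s) = 1 := by
      rw [Multiset.count_eq_of_nodup (Multiset.nodup_range _), if_pos (Multiset.mem_range.2 hi2)]
    exact hc.trans h2
  · rw [if_neg h, Multiset.count_eq_zero]
    intro hm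
    rw [Multiset.mem_map] at hm
    obtain ⟨i, hir, hiv⟩ := hm
    rw [Multiset.mem_range] at hir
    omega

theorem range_two_mul : ∀ s : ℕ, List.range (2 * s) = (List.range s).flatMap fun t => [2 * t, 2 * t + 1]
  | 0 => rfl
  | s + 1 => by
    rw [show 2 * (s + 1) = 2 * s + 1 + 1 by ring, List.range_succ, List.range_succ,
      List.range_succ, List.flatMap_append, ← range_two_mul s, List.flatMap_singleton]
    simp

end TypeBAux

open TypeBAux in
/-- Let `n = r_1 + ... + r_k + s`, and let `δ_1 ≥ ... ≥ δ_m` be the conjugate partition of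
`(r_1,...,r_k)` (so `δ_i = #{j : r_j ≥ i}` and `m = max r_j`). Assume `m` is even and
`m ≤ 2s`. Then the sorted rearrangement `m̃_0 ≤ ... ≤ m̃_{2n}` of the multiset
`⋃_j {1..r_j} ∪ ⋃_j {1..r_j} ∪ {1..2s+1}` (Levi fundamental degrees for the partition
`(r_1,r_1,...,r_k,r_k,2s+1)` of `2n+1`) is: each value `i = 1,...,m` repeated `2δ_i + 1`
times, followed by `m+1, m+2, ..., 2s+1`; moreover its odd-index subsequence
`m̃_1, m̃_3, ..., m̃_{2n-1}` equals the sorted rearrangement of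
`⋃_j {1..r_j} ∪ {2,4,...,2s}`. -/
theorem typeB_levi_degrees_explicit (k s n : ℕ) (r : Fin k → ℕ) (hr : ∀ j, 0 < r j)
    (hn : (∑ j, r j) + s = n)
    (mm : ℕ) (hmm : mm = Finset.univ.sup r) (hmeven : Even mm) (hms : mm ≤ 2 * s)
    (δ : ℕ → ℕ) (hδ : ∀ i, δ i = (Finset.univ.filter (fun j : Fin k => i ≤ r j)).card)
    (Mt M : Multiset ℕ)
    (hMt : Mt =
      (Finset.univ.val.bind fun j : Fin k => Multiset.map (· + 1) (Multiset.range (r j))) +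
      (Finset.univ.val.bind fun j : Fin k => Multiset.map (· + 1) (Multiset.range (r j))) +
      Multiset.map (· + 1) (Multiset.range (2 * s + 1)))
    (hM : M =
      (Finset.univ.val.bind fun j : Fin k => Multiset.map (· + 1) (Multiset.range (r j))) +
      Multiset.map (fun i => 2 * (i + 1)) (Multiset.range s)) :
    (Multiset.sort Mt (· ≤ ·) =
      ((List.range mm).flatMap fun i => List.replicate (2 * δ (i + 1) + 1) (i + 1)) ++
        (List.range (2 * s + 1 - mm)).map (fun i => mm + 1 + i)) ∧
    (∀ i, 1 ≤ i → i ≤ n →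
      (Multiset.sort Mt (· ≤ ·)).getD (2 * i - 1) 0 =
        (Multiset.sort M (· ≤ ·)).getD (i - 1) 0) := by
  have δzero : ∀ v, mm < v → δ v = 0 := by
    intro v hv
    rw [hδ, Finset.card_eq_zero, Finset.filter_eq_empty_iff]
    intro j _
    have hle : r j ≤ Finset.univ.sup r := Finset.le_sup (Finset.mem_univ j)
    omega
  -- the sorted form of Mt
  have hMtL2 : Mt = (((List.range (2 * s + 1)).flatMap fun i =>
      List.replicate (2 * δ (i + 1) + 1) (i + 1) : List ℕ) : Multiset ℕ) := by
    rw [hMt]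
    ext v
    rw [Multiset.coe_count, count_fr (fun i => 2 * δ (i + 1) + 1) v (2 * s + 1),
      Multiset.count_add, Multiset.count_add]
    rcases v with _ | w
    · rw [count_zero_bind_r, count_zero_shift_range, if_neg (by omega)]
    · rw [count_bind_r, count_shift_range, ← hδ (w + 1), show w + 1 - 1 = w from rfl]
      rcases le_or_gt (w + 1) (2 * s + 1) with hw | hw
      · split_ifs <;> omega
      · have h0 : δ (w + 1) = 0 := δzero _ (by omega)
        split_ifs <;> omega
  have hsortMt : Multiset.sort Mt (· ≤ ·) = ((List.range (2 * s + 1)).flatMap fun i =>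
      List.replicate (2 * δ (i + 1) + 1) (i + 1)) := by
    refine List.Perm.eq_of_pairwise' (Multiset.pairwise_sort _ _) (sorted_fr _ _) ?_
    rw [← Multiset.coe_eq_coe, Multiset.sort_eq, hMtL2]
  -- the sorted form of M
  have hML2' : M = (((List.range (2 * s)).flatMap fun i =>
      List.replicate (δ (i + 1) + if (i + 1) % 2 = 0 then 1 else 0) (i + 1) : List ℕ) : Multiset ℕ) := by
    rw [hM]
    ext v
    rw [Multiset.coe_count,
      count_fr (fun i => δ (i + 1) + if (i + 1) % 2 = 0 then 1 else 0) v (2 * s),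
      Multiset.count_add]
    rcases v with _ | w
    · rw [count_zero_bind_r, count_evens, if_neg (by omega), if_neg (by omega)]
    · rw [count_bind_r, count_evens, ← hδ (w + 1), show w + 1 - 1 = w from rfl]
      rcases le_or_gt (w + 1) (2 * s) with hw | hw
      · split_ifs <;> omega
      · have h0 : δ (w + 1) = 0 := δzero _ (by omega)
        split_ifs <;> omega
  have hsortM : Multiset.sort M (· ≤ ·) = ((List.range (2 * s)).flatMap fun i =>
      List.replicate (δ (i + 1) + if (i + 1) % 2 = 0 then 1 else 0) (i + 1)) := by
    refine List.Perm.eq_of_pairwise' (Multiset.pairwise_sort _ _) (sorted_fr _ _) ?_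
    rw [← Multiset.coe_eq_coe, Multiset.sort_eq, hML2']
  -- pairing of the Mt list
  have hpair : ((List.range (2 * s + 1)).flatMap fun i =>
      List.replicate (2 * δ (i + 1) + 1) (i + 1)) =
      ((List.range s).flatMap fun t =>
        List.replicate (2 * δ (2 * t + 1) + 1) (2 * t + 1) ++
          List.replicate (2 * δ (2 * t + 2) + 1) (2 * t + 2)) ++ [2 * s + 1] := by
    rw [List.range_succ, List.flatMap_append, List.flatMap_singleton]
    congr 1
    · rw [range_two_mul s, List.flatMap_assoc]
      apply flatMap_congr
      intro t _
      show List.replicate (2 * δ (2 * t + 1) + 1) (2 * t + 1) ++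
          (List.replicate (2 * δ (2 * t + 1 + 1) + 1) (2 * t + 1 + 1) ++ []) = _
      rw [List.append_nil, show 2 * t + 1 + 1 = 2 * t + 2 from rfl]
    · have h0 : δ (2 * s + 1) = 0 := δzero _ (by omega)
      rw [h0]
      rfl
  -- pairing of the M list
  have hpair' : ((List.range (2 * s)).flatMap fun i =>
      List.replicate (δ (i + 1) + if (i + 1) % 2 = 0 then 1 else 0) (i + 1)) =
      ((List.range s).flatMap fun t =>
        List.replicate (δ (2 * t + 1)) (2 * t + 1) ++
          List.replicate (δ (2 * t + 2) + 1) (2 * t + 2)) := by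
    rw [range_two_mul s, List.flatMap_assoc]
    apply flatMap_congr
    intro t _
    show List.replicate (δ (2 * t + 1) + if (2 * t + 1) % 2 = 0 then 1 else 0) (2 * t + 1) ++
        (List.replicate (δ (2 * t + 1 + 1) + if (2 * t + 1 + 1) % 2 = 0 then 1 else 0)
          (2 * t + 1 + 1) ++ []) = _
    rw [List.append_nil, if_neg (by omega), if_pos (by omega),
      show 2 * t + 1 + 1 = 2 * t + 2 from rfl, Nat.add_zero]
  -- odd-index extraction
  have hOdd : oddIdx ((List.range (2 * s + 1)).flatMap fun i =>
      List.replicate (2 * δ (i + 1) + 1) (i + 1)) =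
      ((List.range (2 * s)).flatMap fun i =>
        List.replicate (δ (i + 1) + if (i + 1) % 2 = 0 then 1 else 0) (i + 1)) := by
    rw [hpair, hpair']
    rw [oddIdx_append _ _ (length_flatMap_even _ _ (fun t _ => by
      simp only [List.length_append, List.length_replicate]
      omega))]
    rw [oddIdx_flatMap _ _ (fun t _ => by
      simp only [List.length_append, List.length_replicate]
      omega)]
    show _ ++ [] = _
    rw [List.append_nil]
    apply flatMap_congr
    intro t _
    exact oddIdx_pair _ _ _ _
  have hsplitEq : ((List.range (2 * s + 1)).flatMap fun i =>
      List.replicate (2 * δ (i + 1) + 1) (i + 1)) =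
      ((List.range mm).flatMap fun i => List.replicate (2 * δ (i + 1) + 1) (i + 1)) ++
        (List.range (2 * s + 1 - mm)).map (fun i => mm + 1 + i) := by
    conv_lhs => rw [show 2 * s + 1 = mm + (2 * s + 1 - mm) by omega]
    rw [List.range_add, List.flatMap_append]
    congr 1
    have : (((List.range (2 * s + 1 - mm)).map (mm + ·)).flatMap fun i =>
        List.replicate (2 * δ (i + 1) + 1) (i + 1)) =
        (List.range (2 * s + 1 - mm)).flatMap fun x => [mm + 1 + x] := by
      rw [List.flatMap_map]
      apply flatMap_congr
      intro x _
      show List.replicate (2 * δ (mm + x + 1) + 1) (mm + x + 1) = _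
      rw [δzero _ (by omega), show mm + x + 1 = mm + 1 + x by ring]
      rfl
    rw [this, flatMap_singleton_eq_map]
  constructor
  · rw [hsortMt, hsplitEq]
  · intro i hi1 _
    rw [hsortMt, hsortM]
    have h := oddIdx_getD ((List.range (2 * s + 1)).flatMap fun i =>
      List.replicate (2 * δ (i + 1) + 1) (i + 1)) (i - 1)
    rw [hOdd] at h
    rw [show 2 * i - 1 = 2 * (i - 1) + 1 by omega, ← h]
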